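/- (Witness value for general states, Proposition 3) Let ρ be a 16×16 density matrix on ℂ⁴ ⊗ ℂ⁴ with correlation coefficients t_{kℓ} = Tr(ρ (A_k ⊗ B_ℓ)). Define E_{xyz} = Tr[(2A_x ⊗ 2B_y) ρ (2A_x ⊗ 2B_y)† · 4 A_z ⊗ B_z] and witness coefficients w_{xyz} = sgn(t_{zz}) Tr(A_x A_z A_x A_z) Tr(B_y B_z B_y B_z). Then Σ_{x,y,z=1}^{16} w_{xyz} E_{xyz} = 4³ Σ_{z=1}^{16} |t_{zz}|. -/

import Mathlib

open Matrix Kronecker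

/-- The Pauli matrices: `σp 0 = I`, `σp 1 = X`, `σp 2 = Y`, `σp 3 = Z`. -/
noncomputable def σp : Fin 4 → Matrix (Fin 2) (Fin 2) ℂ
  | 0 => 1
  | 1 => !![0, 1; 1, 0]
  | 2 => !![0, -Complex.I; Complex.I, 0]
  | 3 => !![1, 0; 0, -1]

/-- The normalized Pauli products `A_k = (1/2) σ_{k₀} ⊗ σ_{k₁}`, viewed as 4×4 matrices. -/
noncomputable def Ap (k : Fin 4 × Fin 4) : Matrix (Fin 2 × Fin 2) (Fin 2 × Fin 2) ℂ :=
  (1/2 : ℂ) • (σp k.1 ⊗ₖ σp k.2)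

def sg (x z : Fin 4) : ℂ := if x = 0 ∨ z = 0 ∨ x = z then 1 else -1

def csg (x z : Fin 4 × Fin 4) : ℂ := sg x.1 z.1 * sg x.2 z.2

lemma sg_sq (x z : Fin 4) : sg x z * sg x z = 1 := by
  unfold sg; split_ifs <;> ring

lemma csg_sq (x z : Fin 4 × Fin 4) : csg x z * csg x z = 1 := by
  unfold csg
  calc sg x.1 z.1 * sg x.2 z.2 * (sg x.1 z.1 * sg x.2 z.2)
      = (sg x.1 z.1 * sg x.1 z.1) * (sg x.2 z.2 * sg x.2 z.2) := by ring
    _ = 1 := by rw [sg_sq, sg_sq, one_mul]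

lemma sigma_herm (x : Fin 4) : (σp x)ᴴ = σp x := by
  fin_cases x <;> simp [σp, Matrix.one_fin_two] <;>
    ext i j <;> fin_cases i <;> fin_cases j <;> simp

lemma sigma_sq (x : Fin 4) : σp x * σp x = 1 := by
  fin_cases x <;>
    simp [σp, Matrix.one_fin_two, Matrix.mul_fin_two] <;>
    norm_num [Complex.ext_iff]

lemma sigma_conj (x z : Fin 4) : σp x * σp z * σp x = sg x z • σp z := by
  fin_cases x <;> fin_cases z <;>
    simp [σp, sg, Matrix.one_fin_two, Matrix.mul_fin_two, Matrix.smul_of] <;>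
    norm_num [Complex.ext_iff]

lemma kron_conjT {m n : Type*} [Fintype m] [Fintype n] [DecidableEq m] [DecidableEq n]
    (A : Matrix m m ℂ) (B : Matrix n n ℂ) : (A ⊗ₖ B)ᴴ = Aᴴ ⊗ₖ Bᴴ := by
  ext i j
  simp [Matrix.conjTranspose_apply, Matrix.kroneckerMap_apply]

lemma Ap_herm (k : Fin 4 × Fin 4) : (Ap k)ᴴ = Ap k := by
  unfold Ap
  rw [Matrix.conjTranspose_smul, kron_conjT, sigma_herm, sigma_herm]
  norm_num

lemma Ap_conj (x z : Fin 4 × Fin 4) :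
    Ap x * Ap z * Ap x = (csg x z / 4) • Ap z := by
  unfold Ap csg
  simp only [Matrix.smul_mul, Matrix.mul_smul, ← Matrix.mul_kronecker_mul]
  rw [sigma_conj, sigma_conj, Matrix.smul_kronecker, Matrix.kronecker_smul]
  simp only [smul_smul]
  ring_nf

lemma Ap_sq (z : Fin 4 × Fin 4) : Ap z * Ap z = (1/4 : ℂ) • 1 := by
  unfold Ap
  rw [Matrix.smul_mul, Matrix.mul_smul, ← Matrix.mul_kronecker_mul, sigma_sq, sigma_sq,
    smul_smul, Matrix.one_kronecker_one]
  norm_num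

lemma Ap_trace_four (x z : Fin 4 × Fin 4) :
    (Ap x * Ap z * Ap x * Ap z).trace = csg x z / 4 := by
  rw [Ap_conj, Matrix.smul_mul, Ap_sq, smul_smul, Matrix.trace_smul, Matrix.trace_one]
  simp only [smul_eq_mul, Finset.card_univ, Fintype.card_prod, Fintype.card_fin]
  push_cast
  ring

lemma real_sign_mul_self (x : ℝ) : Real.sign x * x = |x| := by
  rcases lt_trichotomy x 0 with h | h | h
  · rw [Real.sign_of_neg h, abs_of_neg h]; ring
  · simp [h]
  · rw [Real.sign_of_pos h, abs_of_pos h]; ring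

lemma sAp_conj (x z : Fin 4 × Fin 4) :
    ((2:ℂ) • Ap x) * Ap z * ((2:ℂ) • Ap x) = csg x z • Ap z := by
  rw [Matrix.smul_mul, Matrix.mul_smul, Matrix.smul_mul, smul_smul, Ap_conj, smul_smul]
  congr 1
  ring

lemma U_conj (x y z w : Fin 4 × Fin 4) :
    (((2:ℂ) • Ap x) ⊗ₖ ((2:ℂ) • Ap y)) * (Ap z ⊗ₖ Ap w) * (((2:ℂ) • Ap x) ⊗ₖ ((2:ℂ) • Ap y))
      = (csg x z * csg y w) • (Ap z ⊗ₖ Ap w) := by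
  rw [← Matrix.mul_kronecker_mul, ← Matrix.mul_kronecker_mul, sAp_conj, sAp_conj,
    Matrix.smul_kronecker, Matrix.kronecker_smul, smul_smul]

lemma U_herm (x y : Fin 4 × Fin 4) :
    ((((2:ℂ) • Ap x) ⊗ₖ ((2:ℂ) • Ap y)))ᴴ = (((2:ℂ) • Ap x) ⊗ₖ ((2:ℂ) • Ap y)) := by
  rw [kron_conjT, Matrix.conjTranspose_smul, Matrix.conjTranspose_smul, Ap_herm, Ap_herm]
  norm_num

open ComplexOrder in
/-- Witness value for general states (Proposition 3): for a two-ququart density matrix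
`ρ` with correlation coefficients `t_{zz} = Tr(ρ (A_z ⊗ B_z))` (with `B_j = A_{P(j)}`),
correlators `E_{xyz} = Tr[(2A_x ⊗ 2B_y) ρ (2A_x ⊗ 2B_y)† (4 A_z ⊗ B_z)]` and witness
coefficients `w_{xyz} = sgn(t_{zz}) Tr(A_x A_z A_x A_z) Tr(B_y B_z B_y B_z)`, one has
`Σ_{x,y,z} w_{xyz} E_{xyz} = 4³ Σ_z |t_{zz}|`. -/
theorem witness_value_general (P : Equiv.Perm (Fin 4 × Fin 4))
    (ρ : Matrix ((Fin 2 × Fin 2) × (Fin 2 × Fin 2)) ((Fin 2 × Fin 2) × (Fin 2 × Fin 2)) ℂ)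
    (hρ : ρ.PosSemidef) (hρt : ρ.trace = 1) :
    ∑ x : Fin 4 × Fin 4, ∑ y : Fin 4 × Fin 4, ∑ z : Fin 4 × Fin 4,
      (((Real.sign ((ρ * (Ap z ⊗ₖ Ap (P z))).trace.re) : ℝ) : ℂ)
          * (Ap x * Ap z * Ap x * Ap z).trace
          * (Ap (P y) * Ap (P z) * Ap (P y) * Ap (P z)).trace)
        * (((((2:ℂ) • Ap x) ⊗ₖ ((2:ℂ) • Ap (P y))) * ρ
              * ((((2:ℂ) • Ap x) ⊗ₖ ((2:ℂ) • Ap (P y))))ᴴ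
              * ((4:ℂ) • (Ap z ⊗ₖ Ap (P z)))).trace)
    = ((4^3 * ∑ z : Fin 4 × Fin 4, |(ρ * (Ap z ⊗ₖ Ap (P z))).trace.re| : ℝ) : ℂ) := by
  set t : Fin 4 × Fin 4 → ℂ := fun z => (ρ * (Ap z ⊗ₖ Ap (P z))).trace with ht
  -- realness of t
  have hreal : ∀ z, t z = ((t z).re : ℂ) := by
    intro z
    have h1 : star (t z) = t z := by
      rw [ht]
      simp only
      rw [← Matrix.trace_conjTranspose, Matrix.conjTranspose_mul, kron_conjT,
        Ap_herm, Ap_herm, hρ.1.eq, Matrix.trace_mul_comm]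
    exact (Complex.conj_eq_iff_re.mp h1).symm
  -- pointwise value
  have hterm : ∀ x y z : Fin 4 × Fin 4,
      (((Real.sign ((t z).re) : ℝ) : ℂ)
          * (Ap x * Ap z * Ap x * Ap z).trace
          * (Ap (P y) * Ap (P z) * Ap (P y) * Ap (P z)).trace)
        * (((((2:ℂ) • Ap x) ⊗ₖ ((2:ℂ) • Ap (P y))) * ρ
              * ((((2:ℂ) • Ap x) ⊗ₖ ((2:ℂ) • Ap (P y))))ᴴ
              * ((4:ℂ) • (Ap z ⊗ₖ Ap (P z)))).trace)
      = ((Real.sign ((t z).re) : ℝ) : ℂ) * t z / 4 := by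
    intro x y z
    set U := (((2:ℂ) • Ap x) ⊗ₖ ((2:ℂ) • Ap (P y))) with hU
    have htr : (U * ρ * Uᴴ * ((4:ℂ) • (Ap z ⊗ₖ Ap (P z)))).trace
        = 4 * (csg x z * csg (P y) (P z)) * t z := by
      rw [U_herm, Matrix.mul_smul, Matrix.trace_smul,
        mul_assoc (U * ρ) U, Matrix.trace_mul_comm, ← mul_assoc,
        Matrix.trace_mul_comm, U_conj, Matrix.mul_smul, Matrix.trace_smul, ht]
      simp only [smul_eq_mul]
      ring
    rw [htr, Ap_trace_four, Ap_trace_four]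
    have h1 := csg_sq x z
    have h2 := csg_sq (P y) (P z)
    linear_combination (((Real.sign ((t z).re) : ℝ) : ℂ) * t z / 4
        * (csg (P y) (P z) * csg (P y) (P z))) * h1
      + (((Real.sign ((t z).re) : ℝ) : ℂ) * t z / 4) * h2
  have habs : ∀ z : Fin 4 × Fin 4,
      ((Real.sign ((t z).re) : ℝ) : ℂ) * t z / 4 = ((|(t z).re| : ℝ) : ℂ) / 4 := by
    intro z
    rw [hreal z]
    simp only [Complex.ofReal_re]
    rw [← Complex.ofReal_mul, real_sign_mul_self]
  simp only [ht] at hterm habs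
  simp_rw [hterm, habs]
  rw [Finset.sum_const, Finset.sum_const]
  simp only [Finset.card_univ, Fintype.card_prod, Fintype.card_fin, nsmul_eq_mul]
  push_cast
  rw [Finset.mul_sum, Finset.mul_sum, Finset.mul_sum]
  refine Finset.sum_congr rfl fun z _ => ?_
  push_cast
  ring
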